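/- Let p be an odd prime and let m be an integer with m^(p−1) ≡ 1 (mod p²). Then m is a p-th power in ℚ_p: there exists x ∈ ℚ_p with x^p = m. -/

import Mathlib

open Polynomial Finset

lemma aux_int (p : ℕ) (hp : p.Prime) (hp3 : 3 ≤ p) (t : ℤ) :
    ((p : ℤ))^3 ∣ (1 + (p:ℤ)*t)^p - (1 + (p:ℤ)^2*t) := by
  obtain ⟨n, rfl⟩ : ∃ n, p = n + 3 := ⟨p - 3, by omega⟩
  set q : ℕ := n + 3 with hq
  have hb := add_pow ((q:ℤ)*t) 1 q
  rw [add_comm 1 ((q:ℤ)*t), hb]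
  set f : ℕ → ℤ := fun k => ((q:ℤ)*t)^k * 1^(q-k) * (q.choose k : ℤ) with hf
  have hsum : ∑ k ∈ range (q+1), f k
      = (∑ i ∈ range (n+2), f (i+2)) + f 1 + f 0 := by
    rw [Finset.sum_range_succ' f q, hq, Finset.sum_range_succ' (fun i => f (i+1)) (n+2)]
  rw [hsum]
  have hf0 : f 0 = 1 := by simp [hf]
  have hf1 : f 1 = (q:ℤ)^2 * t := by
    simp [hf, Nat.choose_one_right]
    ring
  rw [hf0, hf1]
  have : (∑ i ∈ range (n+2), f (i+2)) + (q:ℤ)^2*t + 1 - (1 + (q:ℤ)^2*t)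
      = ∑ i ∈ range (n+2), f (i+2) := by ring
  rw [this]
  apply Finset.dvd_sum
  intro i hi
  simp only [Finset.mem_range] at hi
  rcases lt_or_eq_of_le (show i + 2 ≤ q by omega) with hlt | heq
  · have h1 : ((q:ℤ))^2 ∣ ((q:ℤ)*t)^(i+2) := ⟨t^2*((q:ℤ)*t)^i, by ring⟩
    have h2 : ((q:ℤ)) ∣ (q.choose (i+2) : ℤ) := by
      exact_mod_cast Int.natCast_dvd_natCast.mpr (hp.dvd_choose_self (by omega) hlt)
    have := mul_dvd_mul h1 h2
    have h3 : ((q:ℤ))^3 = (q:ℤ)^2 * q := by ring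
    rw [h3]
    calc (q:ℤ)^2 * q ∣ ((q:ℤ)*t)^(i+2) * (q.choose (i+2) : ℤ) := this
      _ ∣ f (i+2) := by rw [hf]; simp
  · have h1 : ((q:ℤ))^3 ∣ ((q:ℤ)*t)^(i+2) := by
      calc ((q:ℤ))^3 ∣ ((q:ℤ))^(i+2) := pow_dvd_pow _ (by omega)
        _ ∣ ((q:ℤ)*t)^(i+2) := by rw [mul_pow]; exact dvd_mul_right _ _
    exact h1.trans (by rw [hf]; exact (dvd_mul_right _ _).trans (dvd_mul_right _ _))

/-- If `p` is an odd prime and `m^(p-1) ≡ 1 (mod p²)` as integers, then `m` is a `p`-th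
power in `ℚ_p`. -/
theorem stmt8 (p : ℕ) [Fact p.Prime] (hp : p ≠ 2) (m : ℤ)
    (h : m ^ (p - 1) ≡ 1 [ZMOD (p : ℤ) ^ 2]) :
    ∃ x : ℚ_[p], x ^ p = (m : ℚ_[p]) := by
  have hpp : p.Prime := Fact.out
  have hp3 : 3 ≤ p := by rcases hpp.two_le.lt_or_eq with h' | h' <;> omega
  have hdvd : ((p:ℤ))^2 ∣ m^(p-1) - 1 := (Int.ModEq.dvd h.symm)
  obtain ⟨t, ht⟩ := hdvd
  have htm : m^(p-1) = 1 + (p:ℤ)^2 * t := by linarith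
  -- m ≠ 0
  have hm : m ≠ 0 := by
    rintro rfl
    rw [zero_pow (by omega : p - 1 ≠ 0)] at htm
    have : ((p:ℤ))^2 ∣ 1 := ⟨-t, by linarith⟩
    have := Int.le_of_dvd one_pos this
    nlinarith [(by exact_mod_cast hp3 : (3:ℤ) ≤ (p:ℤ))]
  set a : ℤ_[p] := ((1 + (p:ℤ)*t : ℤ) : ℤ_[p]) with ha_def
  set u : ℤ_[p] := ((1 + (p:ℤ)^2*t : ℤ) : ℤ_[p]) with hu_def
  set F : Polynomial ℤ_[p] := X^p - C u with hF
  have hFa : F.eval a = a^p - u := by simp [hF]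
  have hFd : F.derivative.eval a = (p : ℤ_[p]) * a^(p-1) := by
    simp [hF, derivative_X_pow]
  have hanorm : ‖a‖ = 1 := by
    have hnd : ¬ ((p:ℤ) ∣ (1 + (p:ℤ)*t)) := by
      intro hd
      have : (p:ℤ) ∣ 1 := (dvd_add_right ⟨t, rfl⟩).mp (by rwa [add_comm] at hd)
      have := Int.le_of_dvd one_pos this
      have : (3:ℤ) ≤ (p:ℤ) := by exact_mod_cast hp3
      omega
    have := (PadicInt.norm_int_lt_one_iff_dvd (1 + (p:ℤ)*t)).not.mpr hnd
    exact le_antisymm a.norm_le_one (not_lt.mp (by rwa [ha_def]))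
  have hdnorm : ‖F.derivative.eval a‖ = ((p:ℝ))⁻¹ := by
    rw [hFd, norm_mul, norm_pow, hanorm, one_pow, mul_one, PadicInt.norm_p]
  have hevnorm : ‖F.eval a‖ ≤ ((p:ℝ)) ^ (-(3:ℕ) : ℤ) := by
    rw [hFa]
    have : a^p - u = (((1 + (p:ℤ)*t)^p - (1 + (p:ℤ)^2*t) : ℤ) : ℤ_[p]) := by
      push_cast [ha_def, hu_def]
      ring
    rw [this]
    rw [PadicInt.norm_int_le_pow_iff_dvd]
    exact_mod_cast aux_int p hpp hp3 t
  have hkey : ‖F.eval a‖ < ‖F.derivative.eval a‖ ^ 2 := by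
    rw [hdnorm]
    have hp1 : (1:ℝ) < (p:ℝ) := by exact_mod_cast hpp.one_lt
    calc ‖F.eval a‖ ≤ ((p:ℝ)) ^ (-(3:ℕ) : ℤ) := hevnorm
      _ < ((p:ℝ)) ^ (-(2:ℕ) : ℤ) := by
          apply zpow_lt_zpow_right₀ hp1; omega
      _ = ((p:ℝ)⁻¹)^2 := by
          rw [inv_pow, ← zpow_natCast (p:ℝ) 2, ← zpow_neg]
  obtain ⟨z, hz, -⟩ := hensels_lemma hkey
  have hz' : z^p = u := by
    rw [hF] at hz
    simp only [coe_aeval_eq_eval, eval_sub, eval_pow, eval_X, eval_C, sub_eq_zero] at hz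
    exact hz
  have hmQ : (m:ℚ_[p]) ≠ 0 := Int.cast_ne_zero.mpr hm
  have hq : ((z : ℚ_[p]))^p = (m:ℚ_[p])^(p-1) := by
    rw [show ((z:ℚ_[p]))^p = ((z^p : ℤ_[p]) : ℚ_[p]) by push_cast; ring, hz', hu_def, ← htm]
    push_cast
    ring
  refine ⟨(m:ℚ_[p]) / z, ?_⟩
  rw [div_pow, hq]
  have hpow : (m:ℚ_[p])^p = (m:ℚ_[p])^(p-1) * m := by
    rw [← pow_succ]
    congr 1
    omega
  rw [hpow, mul_comm, mul_div_assoc, div_self (pow_ne_zero _ hmQ), mul_one]
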